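/- Let A be an n×m matrix with c_1 = v·1_n where v is the value of A, let v_{-1} > v be the value of A_{-1}, and let I ⊆ [m] with 1 ∈ I, |I| ≥ 2. Suppose there exists x† ∈ S_n with (c_i)^T x† = v for all i ∈ I and suppose X* (Player 1's equilibrium set for A) is contained in the relative interior of S_n with x† ∈ X*. Let v̄_I be the value of the reduced game with columns {c_i : i ∈ I \ {1}} and let x̄ ∈ S_n be an equilibrium strategy of Player 1 for this reduced game, i.e., min_{i ∈ I\{1}} (c_i)^T x̄ = v̄_I. If v̄_I > v, then x̄ lies on the relative boundary of S_n. -/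
import Mathlib


noncomputable def colPay {n m : ℕ} (A : Matrix (Fin n) (Fin m) ℝ) (i : Fin m)
    (x : Fin n → ℝ) : ℝ := ∑ j, A j i * x j

noncomputable def minPay {n m : ℕ} (A : Matrix (Fin n) (Fin (m + 1)) ℝ)
    (x : Fin n → ℝ) : ℝ :=
  Finset.univ.inf' Finset.univ_nonempty fun i => colPay A i x

theorem stmt13 {n m : ℕ} (A : Matrix (Fin (n + 1)) (Fin (m + 1)) ℝ) (v vneg1 vbarI : ℝ)
    -- v is the value of the game A
    (hub : ∀ x ∈ stdSimplex ℝ (Fin (n + 1)), minPay A x ≤ v)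
    (hach : ∃ x ∈ stdSimplex ℝ (Fin (n + 1)), minPay A x = v)
    -- the first column is v·1_n
    (hc1 : ∀ j, A j 0 = v)
    -- vneg1, the value of A_{-1}, exceeds v
    (hub1 : ∀ x ∈ stdSimplex ℝ (Fin (n + 1)), ∃ i : Fin (m + 1), i ≠ 0 ∧ colPay A i x ≤ vneg1)
    (hach1 : ∃ x ∈ stdSimplex ℝ (Fin (n + 1)), ∀ i : Fin (m + 1), i ≠ 0 → vneg1 ≤ colPay A i x)
    (hv1 : v < vneg1)
    -- the index set I
    (I : Finset (Fin (m + 1))) (hI0 : (0 : Fin (m + 1)) ∈ I) (hIcard : 2 ≤ I.card)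
    -- x† is an equilibrium of A at which all columns in I are tight
    (xdag : Fin (n + 1) → ℝ) (hxdagS : xdag ∈ stdSimplex ℝ (Fin (n + 1)))
    (hxdagNE : minPay A xdag = v)
    (hxdagI : ∀ i ∈ I, colPay A i xdag = v)
    -- X* is contained in the relative interior of S_n
    (hfull : ∀ x ∈ stdSimplex ℝ (Fin (n + 1)), minPay A x = v → ∀ j, 0 < x j)
    -- vbarI is the value of the reduced game with columns I \ {1}
    (hubI : ∀ x ∈ stdSimplex ℝ (Fin (n + 1)), ∃ i ∈ I, i ≠ 0 ∧ colPay A i x ≤ vbarI)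
    -- x̄ is an equilibrium strategy of Player 1 for the reduced game
    (xbar : Fin (n + 1) → ℝ) (hxbarS : xbar ∈ stdSimplex ℝ (Fin (n + 1)))
    (hxbar : ∀ i ∈ I, i ≠ 0 → vbarI ≤ colPay A i xbar)
    (hvbarI : v < vbarI) :
    ∃ j : Fin (n + 1), xbar j = 0 := by
  by_contra hcon
  push_neg at hcon
  have hpos : ∀ j, 0 < xbar j := fun j => lt_of_le_of_ne (hxbarS.1 j) (Ne.symm (hcon j))
  set ε : ℝ := Finset.univ.inf' Finset.univ_nonempty xbar with hε
  have hεpos : 0 < ε := by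
    rw [hε, Finset.lt_inf'_iff]
    exact fun i _ => hpos i
  have hεle : ∀ j, ε ≤ xbar j := fun j => Finset.inf'_le _ (Finset.mem_univ j)
  have hxdagle1 : ∀ j, xdag j ≤ 1 := by
    intro j
    rw [← hxdagS.2]
    exact Finset.single_le_sum (fun i _ => hxdagS.1 i) (Finset.mem_univ j)
  set xflat : Fin (n + 1) → ℝ := fun j => (1 + ε) * xbar j - ε * xdag j with hxflat
  have hmem : xflat ∈ stdSimplex ℝ (Fin (n + 1)) := by
    constructor
    · intro j
      have h1 := hεle j
      have h2 := hxdagle1 j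
      have h3 := hpos j
      simp only [hxflat]
      nlinarith
    · simp only [hxflat, Finset.sum_sub_distrib, ← Finset.mul_sum, hxbarS.2, hxdagS.2]
      ring
  have hcol : ∀ i, colPay A i xflat = (1 + ε) * colPay A i xbar - ε * colPay A i xdag := by
    intro i
    simp only [colPay, hxflat, Finset.mul_sum, ← Finset.sum_sub_distrib]
    exact Finset.sum_congr rfl fun j _ => by ring
  obtain ⟨i, hiI, hi0, hle⟩ := hubI xflat hmem
  have h1 := hxbar i hiI hi0
  have h2 := hxdagI i hiI
  rw [hcol i, h2] at hle
  nlinarith
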